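/- Let L be the m-element chain and let A be an idempotent n×n matrix over L such that for every k ∈ {1,…,m−1} the cut relation α_k = {(i,j) : a_{ij} ≥ k} is a partial order on X = {1,…,n}. Then a matrix B over L belongs to the 𝓗-class of A if and only if B = P_f A for some permutation f of X that is a common automorphism of all the posets (X; α_k), k = 1,…,m−1. -/

import Mathlib

/-- Multiplication of `n × n` matrices over the `m`-element chain `{0 < 1 < ⋯ < m-1}`
(realized as `Fin m`): `(A * B) i j = max_k min (A i k) (B k j)`. -/
noncomputable def chainMatMul {m n : ℕ} [NeZero m]
    (A B : Matrix (Fin n) (Fin n) (Fin m)) : Matrix (Fin n) (Fin n) (Fin m) :=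
  Matrix.of fun i j => Finset.univ.sup fun k => A i k ⊓ B k j

/-- Green's relation `𝓛` in the semigroup of matrices over the `m`-element chain. -/
def chainGreenL {m n : ℕ} [NeZero m] (A B : Matrix (Fin n) (Fin n) (Fin m)) : Prop :=
  (∃ C, chainMatMul C A = B) ∧ (∃ D, chainMatMul D B = A)

/-- Green's relation `𝓡` in the semigroup of matrices over the `m`-element chain. -/
def chainGreenR {m n : ℕ} [NeZero m] (A B : Matrix (Fin n) (Fin n) (Fin m)) : Prop :=
  (∃ C, chainMatMul A C = B) ∧ (∃ D, chainMatMul B D = A)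

/-- Green's relation `𝓗 = 𝓛 ∩ 𝓡`. -/
def chainGreenH {m n : ℕ} [NeZero m] (A B : Matrix (Fin n) (Fin n) (Fin m)) : Prop :=
  chainGreenL A B ∧ chainGreenR A B

/-- The permutation matrix of `f` over the chain `Fin m`: the `(i,j)` entry is the top
element `m-1` if `j = f i` and `0` otherwise. -/
noncomputable def chainPermMat {m n : ℕ} [NeZero m] (f : Equiv.Perm (Fin n)) :
    Matrix (Fin n) (Fin n) (Fin m) :=
  Matrix.of fun i j => if j = f i then ⊤ else ⊥

section Aux
variable {m n : ℕ} [NeZero m]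

lemma chain_eq_of_cuts {a b : Fin m} (h : ∀ k : Fin m, k ≠ 0 → (k ≤ a ↔ k ≤ b)) : a = b := by
  apply le_antisymm
  · by_cases ha : a = 0
    · subst ha; exact (bot_le : (⊥ : Fin m) ≤ b)
    · exact (h a ha).mp le_rfl
  · by_cases hb : b = 0
    · subst hb; exact (bot_le : (⊥ : Fin m) ≤ a)
    · exact (h b hb).mpr le_rfl

lemma chain_cut_mul {k : Fin m} (hk : k ≠ 0) (M N : Matrix (Fin n) (Fin n) (Fin m)) (i j : Fin n) :
    k ≤ chainMatMul M N i j ↔ ∃ l, k ≤ M i l ∧ k ≤ N l j := by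
  simp only [chainMatMul, Matrix.of_apply]
  rw [Finset.le_sup_iff (bot_lt_iff_ne_bot.mpr (by intro h; exact hk h))]
  simp [le_inf_iff]

lemma chain_permMat_mul (f : Equiv.Perm (Fin n)) (M : Matrix (Fin n) (Fin n) (Fin m)) (i j : Fin n) :
    chainMatMul (chainPermMat f) M i j = M (f i) j := by
  simp only [chainMatMul, chainPermMat, Matrix.of_apply]
  apply le_antisymm
  · apply Finset.sup_le
    intro l _
    by_cases hl : l = f i
    · subst hl; simp
    · simp [hl]
  · calc M (f i) j = (if (f i : Fin n) = f i then (⊤ : Fin m) else ⊥) ⊓ M (f i) j := by simp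
      _ ≤ _ := Finset.le_sup (f := fun l => (if (l : Fin n) = f i then (⊤ : Fin m) else ⊥) ⊓ M l j) (Finset.mem_univ (f i))

lemma chain_mul_permMat (f : Equiv.Perm (Fin n)) (M : Matrix (Fin n) (Fin n) (Fin m)) (i j : Fin n) :
    chainMatMul M (chainPermMat f) i j = M i (f⁻¹ j) := by
  simp only [chainMatMul, chainPermMat, Matrix.of_apply]
  apply le_antisymm
  · apply Finset.sup_le
    intro l _
    by_cases hl : j = f l
    · have hlj : l = f⁻¹ j := by simp [hl]
      subst hlj; exact inf_le_left
    · simp [hl]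
  · calc M i (f⁻¹ j) = M i (f⁻¹ j) ⊓ (if j = f (f⁻¹ j) then (⊤ : Fin m) else ⊥) := by simp
      _ ≤ _ := Finset.le_sup (f := fun l => M i l ⊓ (if j = f l then (⊤ : Fin m) else ⊥)) (Finset.mem_univ (f⁻¹ j))

lemma chain_perm_id (r : Fin n → Fin n → Prop)
    (htrans : ∀ a b c, r a b → r b c → r a c)
    (hanti : ∀ a b, r a b → r b a → a = b)
    (σ : Equiv.Perm (Fin n)) (h : ∀ x, r x (σ x)) : ∀ x, σ x = x := by
  have hpow : ∀ (j : ℕ) (x : Fin n), j ≠ 0 → r x ((σ ^ j) x) := by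
    intro j
    induction j with
    | zero => intro x hx; exact absurd rfl hx
    | succ j ih =>
      intro x _
      rcases Nat.eq_zero_or_pos j with hj | hj
      · subst hj; simpa using h x
      · have h1 : r x ((σ ^ j) x) := ih x hj.ne'
        have h2 : r ((σ ^ j) x) (σ ((σ ^ j) x)) := h _
        have h3 : (σ ^ (j + 1)) x = σ ((σ ^ j) x) := by
          rw [pow_succ' σ j]; rfl
        rw [h3]
        exact htrans _ _ _ h1 h2
  intro x
  set p := orderOf σ with hp
  have hppos : 0 < p := orderOf_pos σ
  rcases Nat.lt_or_ge p 2 with h2 | h2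
  · have hp1 : p = 1 := by omega
    have : σ ^ p = 1 := pow_orderOf_eq_one σ
    rw [hp1, pow_one] at this
    rw [this]; rfl
  · have hback : r (σ x) x := by
      have h1 : r (σ x) ((σ ^ (p - 1)) (σ x)) := hpow (p - 1) (σ x) (by omega)
      have h2 : (σ ^ (p - 1)) (σ x) = x := by
        have : σ ^ (p - 1) * σ = σ ^ p := by
          rw [← pow_succ]; congr 1; omega
        calc (σ ^ (p - 1)) (σ x) = (σ ^ (p - 1) * σ) x := rfl
          _ = (σ ^ p) x := by rw [this]
          _ = x := by rw [pow_orderOf_eq_one σ]; rfl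
      rwa [h2] at h1
    exact hanti _ _ hback (h x)

end Aux

lemma chain_cut_key {m n : ℕ} [NeZero m]
    (A B C D E F : Matrix (Fin n) (Fin n) (Fin m)) {k : Fin m} (hk : k ≠ 0)
    (hrefl : ∀ i, k ≤ A i i)
    (hanti : ∀ i j, k ≤ A i j → k ≤ A j i → i = j)
    (htrans : ∀ i j l, k ≤ A i j → k ≤ A j l → k ≤ A i l)
    (hC : chainMatMul C A = B) (hD : chainMatMul D B = A)
    (hE : chainMatMul A E = B) (hF : chainMatMul B F = A) :
    ∃ f : Equiv.Perm (Fin n),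
      (∀ i j, k ≤ B i j ↔ k ≤ A (f i) j) ∧
      (∀ i j, k ≤ A i j ↔ k ≤ A (f i) (f j)) := by
  have Hγ : ∀ i j, k ≤ B i j ↔ ∃ l, k ≤ C i l ∧ k ≤ A l j := fun i j => by
    rw [← hC]; exact chain_cut_mul hk C A i j
  have Hδ : ∀ i j, k ≤ A i j ↔ ∃ l, k ≤ D i l ∧ k ≤ B l j := fun i j => by
    rw [← hD]; exact chain_cut_mul hk D B i j
  have Hε : ∀ i j, k ≤ B i j ↔ ∃ l, k ≤ A i l ∧ k ≤ E l j := fun i j => by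
    rw [← hE]; exact chain_cut_mul hk A E i j
  have Hφ : ∀ i j, k ≤ A i j ↔ ∃ l, k ≤ B i l ∧ k ≤ F l j := fun i j => by
    rw [← hF]; exact chain_cut_mul hk B F i j
  have hrow : ∀ t, ∃ l, ∀ j, (k ≤ B l j ↔ k ≤ A t j) := by
    intro t
    obtain ⟨l, hDl, hBl⟩ := (Hδ t t).mp (hrefl t)
    refine ⟨l, fun j => ⟨fun h => (Hδ t j).mpr ⟨l, hDl, h⟩, fun h => ?_⟩⟩
    obtain ⟨p, hCp, hAp⟩ := (Hγ l t).mp hBl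
    exact (Hγ l j).mpr ⟨p, hCp, htrans _ _ _ hAp h⟩
  choose r hr using hrow
  have hrinj : Function.Injective r := by
    intro t t' htt
    have h1 : k ≤ A t t' := (hr t t').mp (by rw [htt]; exact (hr t' t').mpr (hrefl t'))
    have h2 : k ≤ A t' t := (hr t' t).mp (by rw [← htt]; exact (hr t t).mpr (hrefl t))
    exact hanti _ _ h1 h2
  have hrbij := Finite.injective_iff_bijective.mp hrinj
  let h : Fin n ≃ Fin n := Equiv.ofBijective r hrbij
  let f₀ : Equiv.Perm (Fin n) := h.symm
  have Hrow' : ∀ i j, k ≤ B i j ↔ k ≤ A (f₀ i) j := by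
    intro i j
    have hri : r (f₀ i) = i := h.apply_symm_apply i
    have h' := hr (f₀ i) j
    rwa [hri] at h'
  have hcol : ∀ t, ∃ l, ∀ i, (k ≤ B i l ↔ k ≤ A i t) := by
    intro t
    obtain ⟨l, hBl, hFl⟩ := (Hφ t t).mp (hrefl t)
    refine ⟨l, fun i => ⟨fun hb => (Hφ i t).mpr ⟨l, hb, hFl⟩, fun ha => ?_⟩⟩
    obtain ⟨p, hAp, hEp⟩ := (Hε t l).mp hBl
    exact (Hε i l).mpr ⟨p, htrans _ _ _ ha hAp, hEp⟩
  choose c hc using hcol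
  have G : ∀ i t, (k ≤ A (f₀ i) (c t) ↔ k ≤ A i t) := fun i t =>
    (Hrow' i (c t)).symm.trans (hc t i)
  have hdiag : ∀ i, k ≤ A (f₀ i) (c i) := fun i => (G i i).mpr (hrefl i)
  have hcinj : Function.Injective c := by
    intro t t' htt
    have h1 : k ≤ A t t' := (hc t' t).mp (by rw [← htt]; exact (hc t t).mpr (hrefl t))
    have h2 : k ≤ A t' t := (hc t t').mp (by rw [htt]; exact (hc t' t').mpr (hrefl t'))
    exact hanti _ _ h1 h2
  have hcbij := Finite.injective_iff_bijective.mp hcinj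
  let e : Fin n ≃ Fin n := Equiv.ofBijective c hcbij
  let σ : Equiv.Perm (Fin n) := f₀.symm.trans e
  have hσ : ∀ x, k ≤ A x (σ x) := by
    intro x
    have hd := hdiag (f₀.symm x)
    have h1 : f₀ (f₀.symm x) = x := f₀.apply_symm_apply x
    have h2 : σ x = c (f₀.symm x) := rfl
    rw [h1] at hd
    rw [h2]
    exact hd
  have hσid := chain_perm_id (fun a b => k ≤ A a b) htrans hanti σ hσ
  have hcf : ∀ i, c i = f₀ i := by
    intro i
    have h3 := hσid (f₀ i)
    have h4 : σ (f₀ i) = c i := by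
      have : f₀.symm (f₀ i) = i := f₀.symm_apply_apply i
      show e (f₀.symm (f₀ i)) = c i
      rw [this]; rfl
    rwa [h4] at h3
  refine ⟨f₀, Hrow', fun i j => ?_⟩
  have h5 := G i j
  rw [hcf j] at h5
  exact h5.symm

/-- Let `A` be an idempotent matrix over the `m`-element chain all of whose cut relations
`α_k = {(i,j) : a_{ij} ≥ k}` (`k = 1,…,m-1`) are partial orders. Then `B` belongs to the
`𝓗`-class of `A` iff `B = P_f A` for some permutation `f` of `X = {1,…,n}` that is a
common automorphism of all the posets `(X; α_k)`. -/
theorem chain_hClass_iff {m n : ℕ} [NeZero m]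
    (A : Matrix (Fin n) (Fin n) (Fin m))
    (hidem : chainMatMul A A = A)
    (hpo : ∀ k : Fin m, k ≠ 0 →
      (∀ i, k ≤ A i i) ∧
      (∀ i j, k ≤ A i j → k ≤ A j i → i = j) ∧
      (∀ i j l, k ≤ A i j → k ≤ A j l → k ≤ A i l))
    (B : Matrix (Fin n) (Fin n) (Fin m)) :
    chainGreenH A B ↔
      ∃ f : Equiv.Perm (Fin n),
        (∀ k : Fin m, k ≠ 0 → ∀ i j, (k ≤ A i j ↔ k ≤ A (f i) (f j))) ∧
        B = chainMatMul (chainPermMat f) A := by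
  constructor
  · rintro ⟨⟨⟨C, hC⟩, ⟨D, hD⟩⟩, ⟨⟨E, hE⟩, ⟨F, hF⟩⟩⟩
    by_cases htop : (⊤ : Fin m) = 0
    · have hall : ∀ a : Fin m, a = 0 := fun a => le_antisymm (htop ▸ (le_top : a ≤ ⊤)) bot_le
      refine ⟨1, fun k hk => absurd (hall k) hk, Matrix.ext fun i j => ?_⟩
      rw [hall (B i j), hall (chainMatMul (chainPermMat 1) A i j)]
    · obtain ⟨f, hfrow, _⟩ :=
        chain_cut_key A B C D E F htop (hpo ⊤ htop).1 (hpo ⊤ htop).2.1 (hpo ⊤ htop).2.2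
          hC hD hE hF
      have key : ∀ k : Fin m, k ≠ 0 →
          (∀ i j, (k ≤ B i j ↔ k ≤ A (f i) j)) ∧
          (∀ i j, (k ≤ A i j ↔ k ≤ A (f i) (f j))) := by
        intro k hk
        obtain ⟨g, hgrow, hgauto⟩ :=
          chain_cut_key A B C D E F hk (hpo k hk).1 (hpo k hk).2.1 (hpo k hk).2.2 hC hD hE hF
        have hfg : ∀ x, f x = g x := by
          have hd : ∀ x, k ≤ A (g x) (f x) := by
            intro x
            have h1 : (⊤ : Fin m) ≤ B x (f x) := (hfrow x (f x)).mpr ((hpo ⊤ htop).1 (f x))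
            exact (hgrow x (f x)).mp (le_trans le_top h1)
          let σ : Equiv.Perm (Fin n) := g.symm.trans f
          have hσ : ∀ y, k ≤ A y (σ y) := by
            intro y
            have := hd (g.symm y)
            have h2 : g (g.symm y) = y := g.apply_symm_apply y
            rw [h2] at this
            exact this
          have hσid := chain_perm_id (fun a b => k ≤ A a b) (hpo k hk).2.2
            (hpo k hk).2.1 σ hσ
          intro x
          have h3 := hσid (g x)
          have h4 : σ (g x) = f x := by
            show f (g.symm (g x)) = f x
            rw [g.symm_apply_apply x]
          rwa [h4] at h3
        constructor
        · intro i j; rw [hfg i]; exact hgrow i j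
        · intro i j; rw [hfg i, hfg j]; exact hgauto i j
      refine ⟨f, fun k hk => (key k hk).2, Matrix.ext fun i j => ?_⟩
      rw [chain_permMat_mul]
      exact chain_eq_of_cuts (fun k hk => (key k hk).1 i j)
  · rintro ⟨f, hauto, rfl⟩
    refine ⟨⟨⟨chainPermMat f, rfl⟩, ⟨chainPermMat f⁻¹, ?_⟩⟩,
      ⟨⟨chainPermMat f, ?_⟩, ⟨chainPermMat f⁻¹, ?_⟩⟩⟩
    · refine Matrix.ext fun i j => ?_
      rw [chain_permMat_mul, chain_permMat_mul]
      simp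
    · refine Matrix.ext fun i j => ?_
      rw [chain_mul_permMat, chain_permMat_mul]
      apply chain_eq_of_cuts
      intro k hk
      rw [hauto k hk i (f⁻¹ j)]
      simp
    · refine Matrix.ext fun i j => ?_
      rw [chain_mul_permMat, chain_permMat_mul, inv_inv]
      exact chain_eq_of_cuts (fun k hk => (hauto k hk i j).symm)
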